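/- Let G_k be the path graph with k + 1 vertices and k edges (vertices 0, 1, …, k with an edge between consecutive vertices), let n ≥ 1 be a natural number, and let 0 ≤ l ≤ k. Then the number of n-colorings of G_k with exactly l improper edges is C^l_{G_k}(n) = C(k, l) · (n − 1)^{k − l} · n, where C(k, l) is the binomial coefficient. Consequently Σ_{l=0}^{k} Σ over colorings weighting each coloring by α^{(number of improper edges)} gives Z_{G_k}(α, n) = Σ_{l=0}^{k} C(k, l) (n − 1)^{k − l} n · α^l. -/

import Mathlib

set_option linter.unnecessarySeqFocus false

/-- `m_H(σ)`: the number of edges of the graph `H` whose two endpoints receive the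
same color under the coloring `σ` (the improper edges of `σ`). -/
noncomputable def mImp {V : Type} (H : SimpleGraph V) {n : ℕ} (σ : V → Fin n) : ℕ :=
  Nat.card {e : Sym2 V // e ∈ H.edgeSet ∧ (Sym2.map σ e).IsDiag}

lemma mImp_path {k n : ℕ} (σ : Fin (k+1) → Fin n) :
    mImp (SimpleGraph.pathGraph (k+1)) σ =
      (Finset.univ.filter fun i : Fin k => σ i.castSucc = σ i.succ).card := by
  classical
  have E : {i : Fin k // σ i.castSucc = σ i.succ} ≃
      {e : Sym2 (Fin (k+1)) // e ∈ (SimpleGraph.pathGraph (k+1)).edgeSet ∧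
        (Sym2.map σ e).IsDiag} := by
    refine Equiv.ofBijective
        (fun i => ⟨s(i.1.castSucc, i.1.succ), ?_, ?_⟩) ⟨?_, ?_⟩
    · rw [SimpleGraph.mem_edgeSet, SimpleGraph.pathGraph_adj]
      left; simp
    · simpa using i.2
    · rintro ⟨i, hi⟩ ⟨j, hj⟩ h
      have h' := congrArg Subtype.val h
      simp only [Sym2.eq_iff] at h'
      replace h := h'
      rcases h with ⟨h1, h2⟩ | ⟨h1, h2⟩
      · exact Subtype.ext (Fin.castSucc_injective _ h1)
      · exfalso
        have := congrArg Fin.val h1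
        have := congrArg Fin.val h2
        simp [Fin.val_succ] at *
        omega
    · rintro ⟨e, he, hd⟩
      induction e using Sym2.ind with
      | _ u v =>
        rw [SimpleGraph.mem_edgeSet, SimpleGraph.pathGraph_adj] at he
        rcases he with h | h
        · have hu : u.val < k := by omega
          refine ⟨⟨⟨u.val, hu⟩, ?_⟩, ?_⟩
          · simp only [Sym2.map_pair_eq, Sym2.isDiag_iff_proj_eq] at hd
            have hc : (⟨u.val, hu⟩ : Fin k).castSucc = u := by ext; simp
            have hs : (⟨u.val, hu⟩ : Fin k).succ = v := by ext; simp [Fin.val_succ, h]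
            rw [hc, hs]; exact hd
          · apply Subtype.ext
            simp only
            congr 1 <;> ext <;> simp [Fin.val_succ, h]
        · have hu : v.val < k := by omega
          refine ⟨⟨⟨v.val, hu⟩, ?_⟩, ?_⟩
          · simp only [Sym2.map_pair_eq, Sym2.isDiag_iff_proj_eq] at hd
            have hc : (⟨v.val, hu⟩ : Fin k).castSucc = v := by ext; simp
            have hs : (⟨v.val, hu⟩ : Fin k).succ = u := by ext; simp [Fin.val_succ, h]
            rw [hc, hs]; exact hd.symm
          · apply Subtype.ext
            simp only
            rw [Sym2.eq_swap]
            congr 1 <;> ext <;> simp [Fin.val_succ, h]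
  rw [mImp, Nat.card_congr E.symm, Nat.card_eq_fintype_card, Fintype.card_subtype]

lemma count_zeros (k n l : ℕ) [NeZero n] :
    (Finset.univ.filter fun d : Fin k → Fin n =>
        (Finset.univ.filter fun i => d i = 0).card = l).card =
      k.choose l * (n - 1) ^ (k - l) := by
  classical
  rw [Finset.card_eq_sum_card_fiberwise
    (f := fun d : Fin k → Fin n => Finset.univ.filter fun i => d i = 0)
    (t := Finset.powersetCard l Finset.univ)
    (fun d hd => by
      rw [Finset.mem_coe, Finset.mem_powersetCard]
      exact ⟨Finset.subset_univ _, by simpa using (Finset.mem_filter.mp (Finset.mem_coe.mp hd)).2⟩)]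
  have key : ∀ S ∈ Finset.powersetCard l (Finset.univ : Finset (Fin k)),
      ((Finset.univ.filter fun d : Fin k → Fin n =>
          (Finset.univ.filter fun i => d i = 0).card = l).filter
        (fun d => (Finset.univ.filter fun i => d i = 0) = S)).card
      = (n - 1) ^ (k - l) := by
    intro S hS
    rw [Finset.mem_powersetCard] at hS
    have hset : ((Finset.univ.filter fun d : Fin k → Fin n =>
          (Finset.univ.filter fun i => d i = 0).card = l).filter
        (fun d => (Finset.univ.filter fun i => d i = 0) = S))
        = Fintype.piFinset (fun i => if i ∈ S then {0} else {0}ᶜ) := by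
      ext d
      simp only [Finset.mem_filter, Fintype.mem_piFinset, Finset.mem_univ, true_and]
      constructor
      · rintro ⟨-, hz⟩ i
        by_cases hi : i ∈ S
        · rw [if_pos hi]
          rw [← hz] at hi
          simpa using (Finset.mem_filter.mp hi).2
        · rw [if_neg hi]
          simp only [Finset.mem_compl, Finset.mem_singleton]
          rw [← hz] at hi
          intro h0
          exact hi (Finset.mem_filter.mpr ⟨Finset.mem_univ _, h0⟩)
      · intro h
        have hz : (Finset.univ.filter fun i => d i = 0) = S := by
          ext i
          have := h i
          by_cases hi : i ∈ S <;> simp [hi] at this <;> simp [hi, this]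
        exact ⟨by rw [hz, hS.2], hz⟩
    rw [hset, Fintype.card_piFinset]
    have hc : ∀ i : Fin k, (if i ∈ S then ({0} : Finset (Fin n)) else {0}ᶜ).card
        = if i ∈ S then 1 else n - 1 := by
      intro i
      by_cases hi : i ∈ S <;> simp [hi, Finset.card_compl]
    simp_rw [hc]
    rw [Finset.prod_ite, Finset.prod_const, Finset.prod_const, one_pow, one_mul,
      Finset.filter_not]
    have h1 : (Finset.univ.filter fun i : Fin k => i ∈ S) = S := by
      ext i; simp
    rw [h1, Finset.card_sdiff_of_subset (Finset.subset_univ S), Finset.card_univ,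
      Fintype.card_fin, hS.2]
  refine (Finset.sum_congr rfl key).trans ?_
  rw [Finset.sum_const, Finset.card_powersetCard, Finset.card_univ,
    Fintype.card_fin, smul_eq_mul]

lemma diff_bij (k n : ℕ) [NeZero n] :
    Function.Bijective (fun σ : Fin (k+1) → Fin n =>
      ((σ 0, fun i : Fin k => σ i.succ - σ i.castSucc) : Fin n × (Fin k → Fin n))) := by
  rw [Fintype.bijective_iff_injective_and_card]
  constructor
  · intro σ τ h
    simp only [Prod.mk.injEq] at h
    funext j
    induction j using Fin.induction with
    | zero => exact h.1
    | succ i ih =>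
      have h2 := congrFun h.2 i
      have e1 : σ i.succ = σ i.castSucc + (σ i.succ - σ i.castSucc) := by
        rw [add_sub_cancel]
      have e2 : τ i.succ = τ i.castSucc + (τ i.succ - τ i.castSucc) := by
        rw [add_sub_cancel]
      rw [e1, h2, ih, ← e2]
  · simp [Fintype.card_pi, pow_succ, mul_comm]

lemma main_count (k n l : ℕ) [NeZero n] :
    Nat.card {σ : Fin (k + 1) → Fin n // mImp (SimpleGraph.pathGraph (k + 1)) σ = l}
      = k.choose l * (n - 1) ^ (k - l) * n := by
  classical
  have E1 : {σ : Fin (k + 1) → Fin n // mImp (SimpleGraph.pathGraph (k + 1)) σ = l}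
      ≃ {σ : Fin (k + 1) → Fin n //
          (Finset.univ.filter fun i : Fin k => σ i.castSucc = σ i.succ).card = l} :=
    Equiv.subtypeEquivRight (fun σ => by rw [mImp_path])
  have E2 : {σ : Fin (k + 1) → Fin n //
        (Finset.univ.filter fun i : Fin k => σ i.castSucc = σ i.succ).card = l}
      ≃ {p : Fin n × (Fin k → Fin n) //
          (Finset.univ.filter fun i : Fin k => p.2 i = 0).card = l} := by
    refine Equiv.subtypeEquiv (Equiv.ofBijective _ (diff_bij k n)) (fun σ => ?_)
    simp only [Equiv.ofBijective_apply]
    constructor <;> intro h <;> rw [← h] <;> congr 1 <;> ext i <;>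
      simp [sub_eq_zero, eq_comm]
  have E3 : {p : Fin n × (Fin k → Fin n) //
        (Finset.univ.filter fun i : Fin k => p.2 i = 0).card = l}
      ≃ {d : Fin k → Fin n //
          (Finset.univ.filter fun i : Fin k => d i = 0).card = l} × Fin n :=
    { toFun := fun p => (⟨p.1.2, p.2⟩, p.1.1)
      invFun := fun x => ⟨(x.2, x.1.1), x.1.2⟩
      left_inv := fun ⟨⟨a, b⟩, h⟩ => rfl
      right_inv := fun ⟨⟨b, h⟩, a⟩ => rfl }
  rw [Nat.card_congr ((E1.trans E2).trans E3), Nat.card_eq_fintype_card,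
    Fintype.card_prod, Fintype.card_subtype, Fintype.card_fin, count_zeros]

/-- For the path graph `G_k` with `k + 1` vertices and `k` edges, the number of
`n`-colorings with exactly `l` improper edges is
`C^l_{G_k}(n) = C(k, l) (n − 1)^{k − l} n`; consequently, weighting each coloring
by `α^{(number of improper edges)}` gives
`Z_{G_k}(α, n) = Σ_{l=0}^{k} C(k, l) (n − 1)^{k − l} n · α^l`. -/
theorem path_graph_impropriety (k n l : ℕ) (hn : 1 ≤ n) (hl : l ≤ k) :
    Nat.card {σ : Fin (k + 1) → Fin n // mImp (SimpleGraph.pathGraph (k + 1)) σ = l} =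
      k.choose l * (n - 1) ^ (k - l) * n ∧
    ∀ (R : Type) [CommRing R] (α : R),
      ∑ σ : Fin (k + 1) → Fin n, α ^ mImp (SimpleGraph.pathGraph (k + 1)) σ =
        ∑ m ∈ Finset.range (k + 1),
          ((k.choose m * (n - 1) ^ (k - m) * n : ℕ) : R) * α ^ m := by
  classical
  have : NeZero n := ⟨by omega⟩
  refine ⟨main_count k n l, fun R _ α => ?_⟩
  have hmap : ∀ σ ∈ (Finset.univ : Finset (Fin (k+1) → Fin n)),
      mImp (SimpleGraph.pathGraph (k + 1)) σ ∈ Finset.range (k + 1) := by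
    intro σ _
    rw [Finset.mem_range, mImp_path, Nat.lt_succ_iff]
    exact (Finset.card_filter_le _ _).trans (by simp)
  rw [← Finset.sum_fiberwise_of_maps_to hmap]
  refine Finset.sum_congr rfl (fun m hm => ?_)
  have hcard : (Finset.univ.filter fun σ : Fin (k+1) → Fin n =>
      mImp (SimpleGraph.pathGraph (k + 1)) σ = m).card
      = k.choose m * (n - 1) ^ (k - m) * n := by
    rw [← main_count k n m, Nat.card_eq_fintype_card, Fintype.card_subtype]
  calc ∑ σ ∈ Finset.univ.filter (fun σ : Fin (k+1) → Fin n =>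
          mImp (SimpleGraph.pathGraph (k + 1)) σ = m),
        α ^ mImp (SimpleGraph.pathGraph (k + 1)) σ
      = ∑ σ ∈ Finset.univ.filter (fun σ : Fin (k+1) → Fin n =>
          mImp (SimpleGraph.pathGraph (k + 1)) σ = m), α ^ m := by
        exact Finset.sum_congr rfl
          (fun σ hσ => congrArg (α ^ ·) (Finset.mem_filter.mp hσ).2)
    _ = _ := by rw [Finset.sum_const, hcard, nsmul_eq_mul]
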